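/- Let X be an n×p real matrix with rows xᵢ, S = diag(s₁,…,sₙ), W(β) = diag(ω(xᵢᵀβ, mᵢ)), u ∈ ℝⁿ with uᵢ = yᵢ − mᵢ/2, and μ(Xβ) ∈ ℝⁿ with i-th entry mᵢ/(1 + exp(−xᵢᵀβ)). If the p×p matrix XᵀSW(β)X is invertible, then (XᵀSW(β)X)⁻¹XᵀSu = β + (XᵀSW(β)X)⁻¹XᵀS(y − μ(Xβ)). That is, the EM parameter update for weighted logistic regression can be written as the current value plus a reweighted-least-squares correction involving the residual y − μ(Xβ). -/

import Mathlib

open Matrix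

/-- The Pólya-Gamma EM weight function: ω(t,m) = (m/(2t))·tanh(t/2) for t ≠ 0,
and ω(0,m) = m/4. -/
noncomputable def omegaPG (t m : ℝ) : ℝ :=
  if t = 0 then m / 4 else m / (2 * t) * Real.tanh (t / 2)

lemma omegaPG_mul (t m : ℝ) :
    omegaPG t m * t = m / (1 + Real.exp (-t)) - m / 2 := by
  unfold omegaPG
  rcases eq_or_ne t 0 with h | h
  · simp [h]; ring
  · rw [if_neg h, Real.tanh_eq_sinh_div_cosh, Real.sinh_eq, Real.cosh_eq]
    set a := Real.exp (t / 2) with ha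
    set b := Real.exp (-(t / 2)) with hb
    have hab : a * b = 1 := by rw [ha, hb, ← Real.exp_add]; simp
    have hexp : Real.exp (-t) = b * b := by rw [hb, ← Real.exp_add]; ring_nf
    have h1 : a + b > 0 := by positivity
    have h2 : 1 + b * b > 0 := by positivity
    rw [hexp]
    field_simp
    linear_combination (2 * m * b) * hab

/-- The EM parameter update for weighted logistic regression,
(XᵀSW(β)X)⁻¹XᵀSu, equals the current value plus a reweighted-least-squares
correction involving the residual y − μ(Xβ). -/
theorem em_update_eq_current_plus_correction (n p : ℕ)
    (X : Matrix (Fin n) (Fin p) ℝ) (s m y : Fin n → ℝ) (β : Fin p → ℝ)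
    (hinv : IsUnit (Xᵀ * Matrix.diagonal s
      * Matrix.diagonal (fun i => omegaPG ((X *ᵥ β) i) (m i)) * X)) :
    (Xᵀ * Matrix.diagonal s
        * Matrix.diagonal (fun i => omegaPG ((X *ᵥ β) i) (m i)) * X)⁻¹
      *ᵥ ((Xᵀ * Matrix.diagonal s) *ᵥ fun i => y i - m i / 2)
    = β + (Xᵀ * Matrix.diagonal s
        * Matrix.diagonal (fun i => omegaPG ((X *ᵥ β) i) (m i)) * X)⁻¹
      *ᵥ ((Xᵀ * Matrix.diagonal s)
        *ᵥ (y - fun i => m i / (1 + Real.exp (-(X *ᵥ β) i)))) := by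
  set W := Matrix.diagonal (fun i => omegaPG ((X *ᵥ β) i) (m i)) with hW
  set A := Xᵀ * Matrix.diagonal s * W * X with hA
  have hdet : IsUnit A.det := (Matrix.isUnit_iff_isUnit_det A).mp hinv
  have hAinv : A⁻¹ * A = 1 := Matrix.nonsing_inv_mul A hdet
  have key : (fun i => y i - m i / 2)
      = (W * X) *ᵥ β + (y - fun i => m i / (1 + Real.exp (-(X *ᵥ β) i))) := by
    funext i
    have : ((W * X) *ᵥ β) i = omegaPG ((X *ᵥ β) i) (m i) * (X *ᵥ β) i := by
      rw [← Matrix.mulVec_mulVec, hW, Matrix.mulVec_diagonal]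
    simp only [Pi.add_apply, Pi.sub_apply, this, omegaPG_mul]
    ring
  rw [key, Matrix.mulVec_add, Matrix.mulVec_add, Matrix.mulVec_mulVec,
    Matrix.mulVec_mulVec]
  have h3 : A⁻¹ * (Xᵀ * Matrix.diagonal s) * (W * X) = A⁻¹ * A := by
    rw [hA]; simp only [Matrix.mul_assoc]
  rw [h3, hAinv, Matrix.one_mulVec]
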